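/- Let s, d, t be positive integers with s > dt, let F be a field, and let C ⊆ F^n be a linear code of dimension ℓ satisfying ℓ·s = n·(s − dt). Let L : [n] → [s] be a labeling (a surjective function) such that every nonzero codeword of C has labelweight at least dt + 1. Then s divides n, and setting j = n/s (a positive integer): (i) C has length n = js and dimension ℓ = j(s − dt), and (ii) |L⁻¹(λ)| = j for every λ ∈ [s]. -/

import Mathlib

open Classical in
/-- The labelweight of a vector `c` with respect to a labeling `L`: the number of
distinct labels appearing on the support of `c`. -/
noncomputable def labelWeight {ι F : Type*} [Fintype ι] {s : ℕ} [Zero F]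
    (L : ι → Fin s) (c : ι → F) : ℕ :=
  ((Finset.univ.filter fun i => c i ≠ 0).image L).card

/-- Let s, d, t be positive integers with s > dt, F a field, C ⊆ F^n a
linear code of dimension ℓ with ℓ·s = n·(s − dt), and L : [n] → [s] a surjective
labeling such that every nonzero codeword has labelweight at least dt + 1.  Then s
divides n and, with j = n/s a positive integer, the code has dimension ℓ = j(s − dt)
and every fiber of L has cardinality j. -/
theorem stmt_3 {F : Type*} [Field F] {n s d t ℓ : ℕ}
    (hs : 0 < s) (hd : 0 < d) (ht : 0 < t) (hst : d * t < s)
    (C : Submodule F (Fin n → F)) (hdim : Module.finrank F C = ℓ)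
    (hrate : ℓ * s = n * (s - d * t))
    (L : Fin n → Fin s) (hL : Function.Surjective L)
    (hwt : ∀ c ∈ C, c ≠ 0 → d * t + 1 ≤ labelWeight L c) :
    s ∣ n ∧ 0 < n / s ∧ ℓ = (n / s) * (s - d * t) ∧
      ∀ lam : Fin s, (Finset.univ.filter fun i => L i = lam).card = n / s := by
  classical
  open Finset in
  have hdt1 : 1 ≤ d * t := Nat.mul_pos hd ht
  set f : Fin s → ℕ := fun lam => (Finset.univ.filter fun i => L i = lam).card with hf
  have hfpos : ∀ lam, 1 ≤ f lam := by
    intro lam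
    obtain ⟨i, hi⟩ := hL lam
    exact Finset.card_pos.2 ⟨i, by simp [hi]⟩
  have hsum : ∑ lam, f lam = n := by
    have h := Finset.card_eq_sum_card_fiberwise
      (fun i (_ : i ∈ (Finset.univ : Finset (Fin n))) => Finset.mem_univ (L i))
    simpa [hf] using h.symm
  -- dimension bound
  have key : ∀ S : Finset (Fin s), S.card = d * t →
      ℓ + ∑ lam ∈ S, f lam ≤ n := by
    intro S hScard
    set T : Finset (Fin n) := Finset.univ.filter (fun i => L i ∈ S) with hT
    have hTsum : T.card = ∑ lam ∈ S, f lam := by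
      have h1 := Finset.card_eq_sum_card_fiberwise
        (fun i (hi : i ∈ T) => (Finset.mem_filter.1 hi).2)
      rw [h1]
      refine Finset.sum_congr rfl fun lam hlam => ?_
      congr 1
      ext i
      simp only [hT, Finset.mem_filter, Finset.mem_univ, true_and]
      constructor
      · exact fun h => h.2
      · intro h; exact ⟨h ▸ hlam, h⟩
    let φ : C →ₗ[F] ({ i : Fin n // i ∉ T } → F) :=
      (LinearMap.funLeft F F (fun i : {i : Fin n // i ∉ T} => (i : Fin n))).comp C.subtype
    have hinj : Function.Injective φ := by
      rw [injective_iff_map_eq_zero]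
      intro x hx
      by_contra hx0
      have hxc : (x : Fin n → F) ≠ 0 := by
        simpa using hx0
      have hb := hwt x x.2 hxc
      have himg : ((Finset.univ.filter fun i => (x : Fin n → F) i ≠ 0).image L) ⊆ S := by
        intro lam hlam
        obtain ⟨i, hi, rfl⟩ := Finset.mem_image.1 hlam
        have hxi := (Finset.mem_filter.1 hi).2
        by_contra hnot
        have hiT : i ∉ T := by simp [hT, hnot]
        have hzero := congrFun hx ⟨i, hiT⟩
        simp only [φ, LinearMap.comp_apply, LinearMap.funLeft_apply, Submodule.coe_subtype,
          Pi.zero_apply] at hzero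
        exact hxi hzero
      have hle : labelWeight L (x : Fin n → F) ≤ d * t := by
        rw [← hScard]
        unfold labelWeight
        exact Finset.card_le_card (by convert himg using 2)
      omega
    have hfin : ℓ ≤ Fintype.card {i : Fin n // i ∉ T} := by
      have hfin' := LinearMap.finrank_le_finrank_of_injective hinj
      rw [Module.finrank_pi] at hfin'
      rw [← hdim]
      exact hfin'
    have hcard : Fintype.card {i : Fin n // i ∉ T} = n - T.card := by
      rw [Fintype.card_subtype_compl, Fintype.card_coe, Fintype.card_fin]
    have hTle : T.card ≤ n := by
      calc T.card ≤ (Finset.univ : Finset (Fin n)).card := Finset.card_le_univ T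
      _ = n := by simp
    rw [hTsum] at *
    omega
  -- rephrased bound
  have keyS : ∀ S : Finset (Fin s), S.card = d * t →
      s * (∑ lam ∈ S, f lam) ≤ n * (d * t) := by
    intro S hc
    have h1 := key S hc
    have h2 : s * (∑ lam ∈ S, f lam) + s * ℓ ≤ s * n := by
      rw [← Nat.mul_add]
      exact Nat.mul_le_mul_left s (by omega)
    have h3 : s * ℓ + n * (d * t) = s * n := by
      rw [Nat.mul_comm s ℓ, hrate, ← Nat.mul_add, Nat.mul_comm s n]
      congr 1
      omega
    omega
  -- choose a max-sum dt-subset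
  have hpne : ((Finset.univ : Finset (Fin s)).powersetCard (d * t)).Nonempty := by
    apply Finset.powersetCard_nonempty.2
    simpa using le_of_lt hst
  obtain ⟨S, hSmem, hSmax⟩ := Finset.exists_max_image _ (fun S => ∑ lam ∈ S, f lam) hpne
  have hScard : S.card = d * t := (Finset.mem_powersetCard.1 hSmem).2
  have hswap : ∀ lam ∉ S, ∀ mu ∈ S, f lam ≤ f mu := by
    intro lam hlam mu hmu
    have hlam' : lam ∉ S.erase mu := fun h => hlam (Finset.mem_of_mem_erase h)
    have hScard' : (insert lam (S.erase mu)).card = d * t := by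
      rw [Finset.card_insert_of_notMem hlam', Finset.card_erase_of_mem hmu, hScard]
      omega
    have hmem' : insert lam (S.erase mu) ∈
        (Finset.univ : Finset (Fin s)).powersetCard (d * t) :=
      Finset.mem_powersetCard.2 ⟨Finset.subset_univ _, hScard'⟩
    have hmax := hSmax _ hmem'
    have h1 : ∑ x ∈ insert lam (S.erase mu), f x = f lam + ∑ x ∈ S.erase mu, f x :=
      Finset.sum_insert hlam'
    have h2 : f mu + ∑ x ∈ S.erase mu, f x = ∑ x ∈ S, f x :=
      Finset.add_sum_erase S f hmu
    omega
  have hout : ∀ lam ∉ S, s * f lam ≤ n := by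
    intro lam hlam
    have h1 : S.card • f lam ≤ ∑ mu ∈ S, f mu :=
      Finset.card_nsmul_le_sum S f (f lam) (fun mu hmu => hswap lam hlam mu hmu)
    rw [hScard, smul_eq_mul] at h1
    have h2 : s * (d * t * f lam) ≤ n * (d * t) :=
      le_trans (Nat.mul_le_mul_left s h1) (keyS S hScard)
    have h3 : (d * t) * (s * f lam) ≤ (d * t) * n := by
      calc (d * t) * (s * f lam) = s * (d * t * f lam) := by ring
      _ ≤ n * (d * t) := h2
      _ = (d * t) * n := by ring
    exact Nat.le_of_mul_le_mul_left h3 hdt1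
  have hsplit : ∑ lam ∈ S, f lam + ∑ lam ∈ Sᶜ, f lam = n := by
    rw [Finset.sum_add_sum_compl]
    exact hsum
  have hcompl_card : Sᶜ.card = s - d * t := by
    rw [Finset.card_compl, hScard, Fintype.card_fin]
  have hB2le : ∑ lam ∈ Sᶜ, s * f lam ≤ (s - d * t) * n := by
    calc ∑ lam ∈ Sᶜ, s * f lam ≤ Sᶜ.card • n :=
          Finset.sum_le_card_nsmul Sᶜ _ n
            (fun lam hlam => hout lam (Finset.mem_compl.1 hlam))
    _ = (s - d * t) * n := by rw [hcompl_card, smul_eq_mul]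
  have hB2sum : s * (∑ lam ∈ Sᶜ, f lam) = ∑ lam ∈ Sᶜ, s * f lam := Finset.mul_sum _ _ _
  have h5 : n * (d * t) + (s - d * t) * n = s * n := by
    rw [Nat.mul_comm n (d * t), ← Nat.add_mul]
    congr 1
    omega
  have e0 : s * (∑ lam ∈ S, f lam) + s * (∑ lam ∈ Sᶜ, f lam) = s * n := by
    rw [← Nat.mul_add, hsplit]
  have hB1 : s * (∑ lam ∈ S, f lam) ≤ n * (d * t) := keyS S hScard
  have hB1eq : s * (∑ lam ∈ S, f lam) = n * (d * t) := by omega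
  have hB2eq : ∑ lam ∈ Sᶜ, s * f lam = (s - d * t) * n := by omega
  have houteq : ∀ lam ∈ Sᶜ, s * f lam = n := by
    intro lam hlam
    by_contra hne
    have hlt : s * f lam < n := lt_of_le_of_ne (hout lam (Finset.mem_compl.1 hlam)) hne
    have hslt : ∑ mu ∈ Sᶜ, s * f mu < ∑ mu ∈ Sᶜ, n :=
      Finset.sum_lt_sum (fun mu hmu => hout mu (Finset.mem_compl.1 hmu)) ⟨lam, hlam, hlt⟩
    rw [Finset.sum_const, smul_eq_mul, hcompl_card] at hslt
    omega
  have hcomplne : Sᶜ.Nonempty := Finset.card_pos.1 (by rw [hcompl_card]; omega)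
  obtain ⟨mu0, hmu0⟩ := hcomplne
  have hineq : ∀ lam ∈ S, s * f lam = n := by
    have hge : ∀ lam ∈ S, n ≤ s * f lam := by
      intro lam hlam
      have h1 : f mu0 ≤ f lam := hswap mu0 (Finset.mem_compl.1 hmu0) lam hlam
      have h2 : s * f mu0 = n := houteq mu0 hmu0
      have h3 : s * f mu0 ≤ s * f lam := Nat.mul_le_mul_left s h1
      omega
    intro lam hlam
    by_contra hne
    have hlt : n < s * f lam := lt_of_le_of_ne (hge lam hlam) (fun h => hne h.symm)
    have hslt : ∑ mu ∈ S, n < ∑ mu ∈ S, s * f mu :=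
      Finset.sum_lt_sum hge ⟨lam, hlam, hlt⟩
    rw [Finset.sum_const, smul_eq_mul, hScard, ← Finset.mul_sum, hB1eq] at hslt
    have : n * (d * t) = d * t * n := Nat.mul_comm _ _
    omega
  have hall : ∀ lam : Fin s, s * f lam = n := by
    intro lam
    by_cases h : lam ∈ S
    · exact hineq lam h
    · exact houteq lam (Finset.mem_compl.2 h)
  have lam0 : Fin s := ⟨0, hs⟩
  have hdvd : s ∣ n := ⟨f lam0, (hall lam0).symm⟩
  have hns : ∀ lam, n / s = f lam := by
    intro lam
    rw [← hall lam, Nat.mul_div_cancel_left _ hs]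
  have h1 : (n / s) * s = n := Nat.div_mul_cancel hdvd
  refine ⟨hdvd, ?_, ?_, ?_⟩
  · rw [hns lam0]; exact hfpos lam0
  · have h2 : ℓ * s = ((n / s) * (s - d * t)) * s := by
      rw [hrate]
      conv_lhs => rw [← h1]
      ring
    exact Nat.eq_of_mul_eq_mul_right hs h2
  · intro lam
    exact (hns lam).symm
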